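/- Let ‖·‖ denote the ℓ¹ norm on row vectors in ℝ^s and the induced operator norm on matrices acting on the right. If S/ (π S e) = w v + δ T where w is a column vector with π w = 1, v a probability row vector, ‖T‖ ≤ 1, 0 ≤ δ < 1/4, and α ∈ Δ satisfies α S e / (π S e) > 2√δ, then the column-sum scalar satisfies α w > √δ, and αS/(αSe) = (v + √δ β)/(1 + √δ β e) for some vector β with ‖β‖ ≤ 1, namely β = √δ α T / (α w). -/

import Mathlib

open Matrix

/-- The key estimate with ℓ¹ norms: if `S/(π S e) = w v + δ T` with `π w = 1`, `v` a
probability vector, `‖T‖ ≤ 1` in the induced ℓ¹ operator norm (acting on row vectors on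
the right), `0 ≤ δ < 1/4`, and `α ∈ Δ` satisfies `α S e/(π S e) > 2√δ`, then `α w > √δ`,
and with `β = √δ α T/(α w)` we have `‖β‖ ≤ 1` and
`α S/(α S e) = (v + √δ β)/(1 + √δ β e)`. -/
theorem stmt10 (s : ℕ) (π w v : Fin s → ℝ) (S T : Matrix (Fin s) (Fin s) ℝ)
    (hπ : π ∈ stdSimplex ℝ (Fin s))
    (hS : ∀ i j, 0 ≤ S i j)
    (hπS : 0 < ∑ j, (π ᵥ* S) j)
    (hw : π ⬝ᵥ w = 1)
    (hv : v ∈ stdSimplex ℝ (Fin s))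
    (δ : ℝ) (hδ0 : 0 ≤ δ) (hδ : δ < 1 / 4)
    (hT : ∀ β : Fin s → ℝ, ∑ j, |(β ᵥ* T) j| ≤ ∑ i, |β i|)
    (hdecomp : (∑ j, (π ᵥ* S) j)⁻¹ • S = (Matrix.of fun i j => w i * v j) + δ • T)
    (α : Fin s → ℝ) (hα : α ∈ stdSimplex ℝ (Fin s))
    (hbig : 2 * Real.sqrt δ < (∑ j, (α ᵥ* S) j) / (∑ j, (π ᵥ* S) j)) :
    Real.sqrt δ < α ⬝ᵥ w ∧
    (∑ i, |((Real.sqrt δ / (α ⬝ᵥ w)) • (α ᵥ* T)) i| ≤ 1) ∧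
    (∑ j, (α ᵥ* S) j)⁻¹ • (α ᵥ* S) =
      (1 + Real.sqrt δ * ∑ j, ((Real.sqrt δ / (α ⬝ᵥ w)) • (α ᵥ* T)) j)⁻¹ •
        (v + Real.sqrt δ • ((Real.sqrt δ / (α ⬝ᵥ w)) • (α ᵥ* T))) := by
  have hc0 : 0 < ∑ j, (π ᵥ* S) j := hπS
  set c := ∑ j, (π ᵥ* S) j with hcdef
  set u := α ᵥ* T with hudef
  set m := α ⬝ᵥ w with hmdef
  have hsd : Real.sqrt δ * Real.sqrt δ = δ := Real.mul_self_sqrt hδ0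
  have hsd0 : 0 ≤ Real.sqrt δ := Real.sqrt_nonneg δ
  have hsumα : ∑ i, |α i| = 1 := by
    rw [← hα.2]
    exact Finset.sum_congr rfl fun i _ => abs_of_nonneg (hα.1 i)
  have hu1 : ∑ j, |u j| ≤ 1 := le_of_le_of_eq (hT α) hsumα
  have huabs : |∑ j, u j| ≤ 1 := (Finset.abs_sum_le_sum_abs _ _).trans hu1
  have key : ∀ j, (α ᵥ* S) j = c * (m * v j + δ * u j) := by
    intro j
    have h : ∑ i, α i * ((c⁻¹ • S) i j)
        = ∑ i, α i * (((Matrix.of fun i j => w i * v j) + δ • T) i j) := by rw [hdecomp]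
    simp only [Matrix.smul_apply, Matrix.add_apply, Matrix.of_apply, smul_eq_mul] at h
    have hL : ∑ i, α i * (c⁻¹ * S i j) = c⁻¹ * (α ᵥ* S) j := by
      simp [Matrix.vecMul, dotProduct, Finset.mul_sum, mul_left_comm]
    have hR : ∑ i, α i * (w i * v j + δ * T i j) = m * v j + δ * u j := by
      simp only [mul_add]
      rw [Finset.sum_add_distrib]
      congr 1
      · rw [hmdef, dotProduct, Finset.sum_mul]
        exact Finset.sum_congr rfl fun i _ => by ring
      · rw [hudef]
        simp [Matrix.vecMul, dotProduct, Finset.mul_sum, mul_left_comm]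
    rw [hL, hR] at h
    field_simp at h
    linarith [h]
  have hsum : ∑ j, (α ᵥ* S) j = c * (m + δ * ∑ j, u j) := by
    rw [Finset.sum_congr rfl fun j _ => key j, ← Finset.mul_sum]
    congr 1
    rw [Finset.sum_add_distrib, ← Finset.mul_sum, ← Finset.mul_sum, hv.2, mul_one]
  have hbig' : 2 * Real.sqrt δ < m + δ * ∑ j, u j := by
    rw [hsum, mul_div_cancel_left₀ _ hc0.ne'] at hbig
    exact hbig
  have hm : Real.sqrt δ < m := by
    have h1 := (abs_le.mp huabs).2
    nlinarith [hsd, hsd0, hbig', hδ, hδ0, mul_le_mul_of_nonneg_left h1 hδ0,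
      sq_nonneg (Real.sqrt δ - 1/2)]
  have hm0 : 0 < m := lt_of_le_of_lt hsd0 hm
  have hD0 : 0 < m + δ * ∑ j, u j := lt_of_le_of_lt (by positivity) hbig'
  refine ⟨hm, ?_, ?_⟩
  · have h1 : ∑ i, |((Real.sqrt δ / m) • u) i| = (Real.sqrt δ / m) * ∑ i, |u i| := by
      rw [Finset.mul_sum]
      refine Finset.sum_congr rfl fun i _ => ?_
      simp [abs_mul, abs_of_nonneg (div_nonneg hsd0 hm0.le)]
    rw [h1]
    calc (Real.sqrt δ / m) * ∑ i, |u i| ≤ (Real.sqrt δ / m) * 1 :=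
          mul_le_mul_of_nonneg_left hu1 (div_nonneg hsd0 hm0.le)
      _ ≤ 1 := by rw [mul_one]; exact (div_le_one hm0).2 hm.le
  · funext j
    simp only [Pi.smul_apply, Pi.add_apply, smul_eq_mul]
    rw [hsum, key j, ← Finset.mul_sum]
    have hden : 1 + Real.sqrt δ * (Real.sqrt δ / m * ∑ j, u j)
        = (m + δ * ∑ j, u j) / m := by
      field_simp
      linear_combination (∑ j, u j) * hsd
    rw [hden]
    have hnum : Real.sqrt δ * (Real.sqrt δ / m * u j) = δ / m * u j := by
      field_simp
      linear_combination (u j) * hsd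
    rw [hnum]
    field_simp
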